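/- For the special dual I^{[*]}(H) of the inclusion ideal of a uniformly increasing hypergraph with containment vector a = (a_1,...,a_n), a_1 ≥ ... ≥ a_n, the maximal degree of a minimal monomial generator deg(I^{[*]}(H)) is at most a_1 = max{a_1,...,a_n}, hence deg(I^{[*]}(H)) ≤ a_2 + ... + a_n whenever n ≥ 2 and a_2 ≥ a_1 - (a_3 + ... + a_n); in particular t = Σ_{i≥2} a_i ≥ deg(I^{[*]}(H)) when a_1 ≤ Σ_{i≥2} a_i. -/
import Mathlib


open MvPolynomial

noncomputable section

/-- The containment vector of a hypergraph with edges `E`: `a j` is the number of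
edges containing the vertex `j`. -/
def contVec {n s : ℕ} (E : Fin s → Finset (Fin n)) (j : Fin n) : ℕ :=
  (Finset.univ.filter fun i : Fin s => j ∈ E i).card

/-- The exponent vector `b_i` of the `i`-th minimal generator
`x^{b_i} = ∏_{x ∈ E_i} x^{s-i+1}` of the inclusion ideal (here `i : Fin s` is
zero-based, so the exponent is `s - i`). -/
def expVec {n s : ℕ} (E : Fin s → Finset (Fin n)) (i : Fin s) : Fin n →₀ ℕ :=
  Finsupp.ofSupportFinite (fun j => if j ∈ E i then s - i.val else 0) (Set.toFinite _)

/-- The inclusion ideal `I(H)` of a uniformly increasing hypergraph. -/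
def inclIdeal (K : Type*) [Field K] {n s : ℕ} (E : Fin s → Finset (Fin n)) :
    Ideal (MvPolynomial (Fin n) K) :=
  Ideal.span (Set.range fun i : Fin s => monomial (expVec E i) (1 : K))

/-- The special dual `I^{[*]}(H) = ⋂_i m^{a∖b_i}`: the Alexander dual of the inclusion
ideal with respect to the containment vector `a`. -/
def specialDual (K : Type*) [Field K] {n s : ℕ} (E : Fin s → Finset (Fin n)) :
    Ideal (MvPolynomial (Fin n) K) :=
  ⨅ i : Fin s, Ideal.span
    ((fun j => (X j : MvPolynomial (Fin n) K) ^ (contVec E j + 1 - expVec E i j)) ''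
      (E i : Set (Fin n)))

/-- `v` is the exponent vector of a minimal monomial generator of the monomial ideal
`J`: `x^v ∈ J`, but no proper monomial divisor of `x^v` lies in `J`. -/
def IsMinGen {K : Type*} [Field K] {n : ℕ} (J : Ideal (MvPolynomial (Fin n) K))
    (v : Fin n →₀ ℕ) : Prop :=
  monomial v (1 : K) ∈ J ∧ ∀ w : Fin n →₀ ℕ, w ≤ v → w ≠ v → monomial w (1 : K) ∉ J

/-- Membership of a monomial in an ideal generated by pure powers of variables. -/
lemma mem_span_pows {K : Type*} [Field K] {n : ℕ} (T : Finset (Fin n)) (c : Fin n → ℕ)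
    (v : Fin n →₀ ℕ) :
    monomial v (1 : K) ∈ Ideal.span
        ((fun j => (X j : MvPolynomial (Fin n) K) ^ c j) '' (T : Set (Fin n))) ↔
      ∃ j ∈ T, c j ≤ v j := by
  have himg : ((fun j => (X j : MvPolynomial (Fin n) K) ^ c j) '' (T : Set (Fin n)))
      = ((fun m => monomial m (1 : K)) ''
          ((fun j => Finsupp.single j (c j)) '' (T : Set (Fin n)))) := by
    rw [Set.image_image]
    apply Set.image_congr
    intro j _
    rw [X_pow_eq_monomial]
  have hsupp : (monomial v (1 : K)).support = {v} := by
    classical rw [support_monomial, if_neg (one_ne_zero : (1 : K) ≠ 0)]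
  rw [himg, mem_ideal_span_monomial_image]
  simp only [hsupp, Finset.mem_singleton]
  constructor
  · intro h
    obtain ⟨si, hsi, hle⟩ := h v rfl
    obtain ⟨j, hj, rfl⟩ := hsi
    exact ⟨j, hj, Finsupp.single_le_iff.mp hle⟩
  · rintro ⟨j, hj, hle⟩ xi rfl
    exact ⟨_, ⟨j, hj, rfl⟩, Finsupp.single_le_iff.mpr hle⟩

/-- Any minimal monomial generator of the special dual has total degree at most `s`. -/
lemma degle_aux {K : Type*} [Field K] {n s : ℕ} (E : Fin s → Finset (Fin n)) (hs : 0 < s)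
    (hmono : Monotone E) (hlast : E ⟨s - 1, by omega⟩ = Finset.univ)
    (v : Fin n →₀ ℕ) (hv : IsMinGen (specialDual K E) v) :
    (v.sum fun _ m => m) ≤ s := by
  classical
  have hne : ∀ j : Fin n, (Finset.univ.filter fun i : Fin s => j ∈ E i).Nonempty := by
    intro j
    exact ⟨⟨s - 1, by omega⟩, by simp [hlast]⟩
  set iMin : Fin n → Fin s :=
    fun j => (Finset.univ.filter fun i : Fin s => j ∈ E i).min' (hne j) with hiMin
  have hmem_iff : ∀ (j : Fin n) (i : Fin s), j ∈ E i ↔ iMin j ≤ i := by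
    intro j i
    constructor
    · intro h
      exact Finset.min'_le _ _ (by simp [h])
    · intro h
      have hm : j ∈ E (iMin j) := by
        have := Finset.min'_mem _ (hne j)
        simpa [hiMin] using this
      exact hmono h hm
  have hcont : ∀ j, contVec E j = s - (iMin j).val := by
    intro j
    unfold contVec
    have h : (Finset.univ.filter fun i : Fin s => j ∈ E i) = Finset.Ici (iMin j) := by
      ext i
      simp [hmem_iff j i]
    rw [h, Fin.card_Ici]
  have hc : ∀ (i : Fin s) (j : Fin n), j ∈ E i →
      contVec E j + 1 - expVec E i j = i.val + 1 - (iMin j).val := by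
    intro i j hj
    have h1 : (iMin j).val ≤ i.val := (hmem_iff j i).mp hj
    have h2 : expVec E i j = s - i.val := by
      show (Finsupp.ofSupportFinite _ _ : Fin n →₀ ℕ) j = _
      rw [Finsupp.ofSupportFinite_coe]
      simp [hj]
    rw [hcont, h2]
    have hi := i.isLt
    have hi2 := (iMin j).isLt
    omega
  have hmemDual : ∀ w : Fin n →₀ ℕ, monomial w (1 : K) ∈ specialDual K E ↔
      ∀ i : Fin s, ∃ j ∈ E i, contVec E j + 1 - expVec E i j ≤ w j := by
    intro w
    rw [specialDual, Submodule.mem_iInf]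
    apply forall_congr'
    intro i
    exact mem_span_pows (E i) _ w
  obtain ⟨hvmem, hvmin⟩ := hv
  have hwit := (hmemDual v).mp hvmem
  have hlevel : ∀ j : Fin n, ∃ i : Fin s, j ∈ v.support →
      (iMin j).val ≤ i.val ∧ v j = i.val + 1 - (iMin j).val ∧
      ∀ j' ∈ E i, j' ≠ j → v j' < i.val + 1 - (iMin j').val := by
    intro j
    by_cases hj : j ∈ v.support
    swap
    · exact ⟨⟨0, hs⟩, fun h => absurd h hj⟩
    have hvj : 1 ≤ v j := Nat.one_le_iff_ne_zero.mpr (Finsupp.mem_support_iff.mp hj)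
    set w := v - Finsupp.single j 1 with hw
    have hwj : w j = v j - 1 := by
      simp [hw, Finsupp.tsub_apply]
    have hwother : ∀ j' : Fin n, j' ≠ j → w j' = v j' := by
      intro j' hj'
      simp [hw, Finsupp.tsub_apply, Finsupp.single_apply, (Ne.symm hj' : ¬ j = j')]
    have hwle : w ≤ v := tsub_le_self
    have hwne : w ≠ v := by
      intro h
      rw [h] at hwj
      omega
    have hwnot := hvmin w hwle hwne
    rw [hmemDual] at hwnot
    push_neg at hwnot
    obtain ⟨i, hi⟩ := hwnot
    obtain ⟨j'', hj''E, hj''⟩ := hwit i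
    have hj''eq : j'' = j := by
      by_contra hne'
      have h1 := hi j'' hj''E
      rw [hwother j'' hne'] at h1
      omega
    rw [hj''eq] at hj''E hj''
    have hjEi : j ∈ E i := hj''E
    have hle : (iMin j).val ≤ i.val := (hmem_iff j i).mp hjEi
    have hcval := hc i j hjEi
    have h2 := hi j hjEi
    rw [hwj, hcval] at h2
    rw [hcval] at hj''
    refine ⟨i, fun _ => ⟨hle, by omega, ?_⟩⟩
    intro j' hj'E hj'ne
    have h3 := hi j' hj'E
    rw [hwother j' hj'ne, hc i j' hj'E] at h3
    exact h3
  choose I hI using hlevel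
  have hdisj : ∀ x ∈ v.support, ∀ y ∈ v.support, x ≠ y →
      Disjoint (Finset.Icc (iMin x).val (I x).val) (Finset.Icc (iMin y).val (I y).val) := by
    intro x hx y hy hxy
    obtain ⟨hx1, hx2, hx3⟩ := hI x hx
    obtain ⟨hy1, hy2, hy3⟩ := hI y hy
    rw [Finset.disjoint_left]
    intro t htx hty
    rw [Finset.mem_Icc] at htx hty
    have hyEx : y ∈ E (I x) := (hmem_iff y (I x)).mpr (by rw [Fin.le_def]; omega)
    have hxEy : x ∈ E (I y) := (hmem_iff x (I y)).mpr (by rw [Fin.le_def]; omega)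
    have h1 := hx3 y hyEx (Ne.symm hxy)
    have h2 := hy3 x hxEy hxy
    omega
  calc (v.sum fun _ m => m) = ∑ j ∈ v.support, v j := rfl
  _ = ∑ j ∈ v.support, (Finset.Icc (iMin j).val (I j).val).card := by
      apply Finset.sum_congr rfl
      intro j hj
      obtain ⟨h1, h2, _⟩ := hI j hj
      rw [Nat.card_Icc]
      omega
  _ = (v.support.biUnion fun j => Finset.Icc (iMin j).val (I j).val).card :=
      (Finset.card_biUnion hdisj).symm
  _ ≤ (Finset.range s).card := by
      apply Finset.card_le_card
      intro t ht
      rw [Finset.mem_biUnion] at ht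
      obtain ⟨j, hj, htj⟩ := ht
      rw [Finset.mem_Icc] at htj
      have := (I j).isLt
      rw [Finset.mem_range]
      omega
  _ = s := Finset.card_range s

/-- For the special dual `I^{[*]}(H)` with containment vector
`a_1 ≥ ⋯ ≥ a_n` (vertices ordered so that edges are initial segments, `E_s = X`):
`a_1 = max{a_1,…,a_n}`, every minimal monomial generator of `I^{[*]}(H)` has degree
at most `a_1`, and consequently `deg(I^{[*]}(H)) ≤ t = a_2 + ⋯ + a_n` whenever
`a_1 ≤ a_2 + ⋯ + a_n`. -/
theorem stmt19 {K : Type*} [Field K]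
    {n s d : ℕ} (E : Fin s → Finset (Fin n)) (hs : 0 < s) (hd : 1 ≤ d)
    (hmono : Monotone E) (hcard1 : 2 ≤ (E ⟨0, hs⟩).card)
    (hstep : ∀ i : Fin s, ∀ h : i.val + 1 < s, (E ⟨i.val + 1, h⟩).card = (E i).card + d)
    (hn : 2 ≤ n)
    (hinit : ∀ i : Fin s, ∀ j k : Fin n, j ≤ k → k ∈ E i → j ∈ E i)
    (hlast : E ⟨s - 1, by omega⟩ = Finset.univ) :
    (contVec E ⟨0, by omega⟩ = Finset.univ.sup fun j : Fin n => contVec E j) ∧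
      (∀ v : Fin n →₀ ℕ, IsMinGen (specialDual K E) v →
        (v.sum fun _ m => m) ≤ contVec E ⟨0, by omega⟩) ∧
      (contVec E ⟨0, by omega⟩
          ≤ ∑ j ∈ Finset.univ.erase (⟨0, by omega⟩ : Fin n), contVec E j →
        ∀ v : Fin n →₀ ℕ, IsMinGen (specialDual K E) v →
          (v.sum fun _ m => m)
            ≤ ∑ j ∈ Finset.univ.erase (⟨0, by omega⟩ : Fin n), contVec E j) := by
  classical
  have hv0mem : ∀ i : Fin s, (⟨0, by omega⟩ : Fin n) ∈ E i := by
    intro i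
    obtain ⟨k, hk⟩ := Finset.card_pos.mp (by omega : 0 < (E ⟨0, hs⟩).card)
    have h0 : (⟨0, by omega⟩ : Fin n) ∈ E ⟨0, hs⟩ :=
      hinit _ _ k (by simp [Fin.le_def]) hk
    exact hmono (by simp [Fin.le_def]) h0
  have hcv0 : contVec E ⟨0, by omega⟩ = s := by
    unfold contVec
    rw [Finset.filter_true_of_mem (fun i _ => hv0mem i), Finset.card_univ, Fintype.card_fin]
  have hcvle : ∀ j : Fin n, contVec E j ≤ s := by
    intro j
    unfold contVec
    calc (Finset.univ.filter fun i : Fin s => j ∈ E i).card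
        ≤ (Finset.univ : Finset (Fin s)).card := Finset.card_filter_le _ _
    _ = s := by rw [Finset.card_univ, Fintype.card_fin]
  refine ⟨?_, ?_, ?_⟩
  · apply le_antisymm
    · exact Finset.le_sup (Finset.mem_univ _)
    · apply Finset.sup_le
      intro j _
      rw [hcv0]
      exact hcvle j
  · intro v hv
    rw [hcv0]
    exact degle_aux E hs hmono hlast v hv
  · intro ht v hv
    have h1 := degle_aux E hs hmono hlast v hv
    omega
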